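/- For Bernoulli distributions, if 0 < Δ < 1/40, then KL(Bernoulli(1/2) ‖ Bernoulli(1/2 + 4Δ)) ≤ 64Δ². -/
import Mathlib


/-- KL divergence between Bernoulli(p) and Bernoulli(q) for p, q ∈ (0,1). -/
noncomputable def klBernoulli (p q : ℝ) : ℝ :=
  p * Real.log (p / q) + (1 - p) * Real.log ((1 - p) / (1 - q))

theorem kl_bernoulli_half_le (Δ : ℝ) (hΔ0 : 0 < Δ) (hΔ : Δ < 1 / 40) :
    klBernoulli (1 / 2) (1 / 2 + 4 * Δ) ≤ 64 * Δ ^ 2 := by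
  have h1 : (0:ℝ) < 1 / 2 + 4 * Δ := by linarith
  have h2 : (0:ℝ) < 1 / 2 - 4 * Δ := by linarith
  have ha : (0:ℝ) < (1/2) / (1/2 + 4*Δ) := by positivity
  have hb : (0:ℝ) < (1/2) / (1/2 - 4*Δ) := by positivity
  have hx : (0:ℝ) < 1 - 64 * Δ^2 := by nlinarith
  have hprod : (1/2) / (1/2 + 4*Δ) * ((1/2) / (1/2 - 4*Δ)) = (1 - 64 * Δ^2)⁻¹ := by
    rw [div_mul_div_comm, div_eq_iff (by positivity), inv_mul_eq_div, div_mul_eq_mul_div,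
      eq_div_iff hx.ne']
    ring
  have hkl : klBernoulli (1 / 2) (1 / 2 + 4 * Δ)
      = 1/2 * Real.log ((1 - 64 * Δ^2)⁻¹) := by
    unfold klBernoulli
    rw [← hprod, Real.log_mul ha.ne' hb.ne']
    have : (1:ℝ) - (1/2 + 4*Δ) = 1/2 - 4*Δ := by ring
    rw [this]
    ring_nf
  rw [hkl]
  have hlog : Real.log ((1 - 64 * Δ^2)⁻¹) ≤ (1 - 64 * Δ^2)⁻¹ - 1 :=
    Real.log_le_sub_one_of_pos (by positivity)
  have hb2 : (1 - 64 * Δ^2)⁻¹ - 1 ≤ 128 * Δ^2 := by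
    rw [sub_le_iff_le_add, inv_le_iff_one_le_mul₀ hx]
    have hsq : Δ^2 < 1/1600 := by nlinarith
    nlinarith [sq_nonneg Δ, mul_nonneg (sq_nonneg Δ) (sq_nonneg Δ)]
  linarith
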